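/- Let Z ⊊ Y ⊊ X with |Z| ≥ 2 and α, β ∈ T(X,Y,Z). If α and β are L*-related in T(X,Y,Z) then α(X) = β(X). (L* here is characterized via: for all η, θ ∈ T(X,Y,Z)¹, αη = αθ ⟺ βη = βθ.) -/
import Mathlib

open Classical in
lemma stmt_14_aux {X : Type*} (Y Z : Set X)
    (hZ2 : ∃ z₁ ∈ Z, ∃ z₂ ∈ Z, z₁ ≠ z₂)
    (α β : X → X)
    (hLs : ∀ η θ : X → X, (η = id ∨ η '' Y ⊆ Z) → (θ = id ∨ θ '' Y ⊆ Z) →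
      ((η ∘ α = θ ∘ α) ↔ (η ∘ β = θ ∘ β))) :
    Set.range α ⊆ Set.range β := by
  rintro x ⟨a, rfl⟩
  by_contra hx
  obtain ⟨z₁, hz₁, z₂, hz₂, hne⟩ := hZ2
  set η : X → X := fun w => if w = α a then z₂ else z₁ with hη
  set θ : X → X := fun w => z₁ with hθ
  have hηT : η '' Y ⊆ Z := by
    rintro _ ⟨w, _, rfl⟩
    simp only [hη]; split <;> assumption
  have hθT : θ '' Y ⊆ Z := by
    rintro _ ⟨w, _, rfl⟩; exact hz₁
  have hβeq : η ∘ β = θ ∘ β := by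
    funext w
    simp only [Function.comp, hη, hθ]
    rw [if_neg]
    intro h
    exact hx ⟨w, h⟩
  have hαeq : η ∘ α = θ ∘ α := (hLs η θ (Or.inr hηT) (Or.inr hθT)).mpr hβeq
  have := congrFun hαeq a
  simp only [Function.comp, hη, hθ, if_pos rfl] at this
  exact hne this.symm

/-- If Z ⊊ Y ⊊ X, |Z| ≥ 2, and α, β ∈ T(X,Y,Z) are L*-related in T(X,Y,Z)
(Fountain's characterization), then α(X) = β(X). -/
theorem stmt_14 {X : Type*} (Y Z : Set X) (hZY : Z ⊂ Y) (hYX : Y ⊂ Set.univ)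
    (hZ2 : ∃ z₁ ∈ Z, ∃ z₂ ∈ Z, z₁ ≠ z₂)
    (α β : X → X) (hα : α '' Y ⊆ Z) (hβ : β '' Y ⊆ Z)
    (hLs : ∀ η θ : X → X, (η = id ∨ η '' Y ⊆ Z) → (θ = id ∨ θ '' Y ⊆ Z) →
      ((η ∘ α = θ ∘ α) ↔ (η ∘ β = θ ∘ β))) :
    Set.range α = Set.range β :=
  Set.Subset.antisymm
    (stmt_14_aux Y Z hZ2 α β hLs)
    (stmt_14_aux Y Z hZ2 β α (fun η θ h1 h2 => (hLs η θ h1 h2).symm))
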